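/- For nonzero reals p, r and coordinates (φ¹,φ²,φ³), the flat torsionless metric G = [[p,0,pφ²],[0,p,-pφ¹],[pφ²,-pφ¹,r+p(φ¹)²+p(φ²)²]] together with Φ = 0 satisfies the one-loop vanishing β-function equations: Ricᵢⱼ = 0 and R = 0. -/

import Mathlib

open scoped BigOperators

/-- Partial derivative in the `i`-th coordinate direction on `ℝ³`. -/
noncomputable def pd (i : Fin 3) (f : (Fin 3 → ℝ) → ℝ) (x : Fin 3 → ℝ) : ℝ :=
  fderiv ℝ f x (Pi.single i 1)

/-- Christoffel symbols `Γ^k_{ij}` of the Levi-Civita connection of the metric `g`. -/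
noncomputable def christoffel (g : (Fin 3 → ℝ) → Matrix (Fin 3) (Fin 3) ℝ)
    (k i j : Fin 3) (x : Fin 3 → ℝ) : ℝ :=
  (1/2) * ∑ l, (g x)⁻¹ k l *
    (pd i (fun y => g y l j) x + pd j (fun y => g y l i) x - pd l (fun y => g y i j) x)

/-- Riemann curvature tensor `R^l_{kij}`. -/
noncomputable def riemann (g : (Fin 3 → ℝ) → Matrix (Fin 3) (Fin 3) ℝ)
    (l k i j : Fin 3) (x : Fin 3 → ℝ) : ℝ :=
  pd i (fun y => christoffel g l j k y) x - pd j (fun y => christoffel g l i k y) x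
    + ∑ m, (christoffel g l i m x * christoffel g m j k x
        - christoffel g l j m x * christoffel g m i k x)

/-- Ricci tensor `R_{jk} = R^i_{jik}`. -/
noncomputable def ricci (g : (Fin 3 → ℝ) → Matrix (Fin 3) (Fin 3) ℝ)
    (j k : Fin 3) (x : Fin 3 → ℝ) : ℝ :=
  ∑ i, riemann g i j i k x

/-- Scalar curvature `R = g^{jk} R_{jk}`. -/
noncomputable def scalarCurv (g : (Fin 3 → ℝ) → Matrix (Fin 3) (Fin 3) ℝ)
    (x : Fin 3 → ℝ) : ℝ :=
  ∑ j, ∑ k, (g x)⁻¹ j k * ricci g j k x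

/-- The metric of the sigma model built from the Manin triple (7₀|1) with `E₀ = diag(p,p,r)`. -/
noncomputable def metric701 (p r : ℝ) (x : Fin 3 → ℝ) : Matrix (Fin 3) (Fin 3) ℝ :=
  !![p, 0, p * x 1;
     0, p, -p * x 0;
     p * x 1, -p * x 0, r + p * (x 0)^2 + p * (x 1)^2]

lemma hasFDerivAt_coord (j : Fin 3) (x : Fin 3 → ℝ) :
    HasFDerivAt (fun y : Fin 3 → ℝ => y j)
      (ContinuousLinearMap.proj (R := ℝ) (φ := fun _ : Fin 3 => ℝ) j) x :=
  (ContinuousLinearMap.proj (R := ℝ) (φ := fun _ : Fin 3 => ℝ) j).hasFDerivAt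

lemma pd_hasFDeriv {f : (Fin 3 → ℝ) → ℝ} {L : (Fin 3 → ℝ) →L[ℝ] ℝ} {x : Fin 3 → ℝ}
    (h : HasFDerivAt f L x) (i : Fin 3) : pd i f x = L (Pi.single i 1) := by
  rw [pd, h.fderiv]

lemma pd_const (i : Fin 3) (c : ℝ) (x : Fin 3 → ℝ) : pd i (fun _ => c) x = 0 := by
  rw [pd_hasFDeriv (hasFDerivAt_const c x) i]; rfl

lemma pd_cmul (i j : Fin 3) (c : ℝ) (x : Fin 3 → ℝ) :
    pd i (fun y => c * y j) x = if j = i then c else 0 := by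
  rw [pd_hasFDeriv ((hasFDerivAt_coord j x).const_mul c) i]
  by_cases h : j = i <;> simp [h, Pi.single_apply]

lemma pd_negcmul (i j : Fin 3) (c : ℝ) (x : Fin 3 → ℝ) :
    pd i (fun y => -(c * y j)) x = if j = i then -c else 0 := by
  rw [pd_hasFDeriv (f := fun y => -(c * y j)) ((hasFDerivAt_coord j x).const_mul c).neg i]
  by_cases h : j = i <;> simp [h, Pi.single_apply]

lemma pd_negcoord (i j : Fin 3) (x : Fin 3 → ℝ) :
    pd i (fun y => -y j) x = if j = i then -1 else 0 := by
  rw [pd_hasFDeriv (f := fun y => -y j) (hasFDerivAt_coord j x).neg i]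
  by_cases h : j = i <;> simp [h, Pi.single_apply]

lemma pd_quad (i : Fin 3) (r p : ℝ) (x : Fin 3 → ℝ) :
    pd i (fun y => r + p * (y 0)^2 + p * (y 1)^2) x =
      (if (0 : Fin 3) = i then 2 * p * x 0 else 0) +
      (if (1 : Fin 3) = i then 2 * p * x 1 else 0) := by
  have he : (fun y : Fin 3 → ℝ => r + p * (y 0)^2 + p * (y 1)^2)
      = fun y : Fin 3 → ℝ => r + p * (y 0 * y 0) + p * (y 1 * y 1) := by
    funext y; ring
  rw [he, pd_hasFDeriv (f := fun y => r + p * (y 0 * y 0) + p * (y 1 * y 1)) (((hasFDerivAt_const r x).add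
      (((hasFDerivAt_coord 0 x).mul (hasFDerivAt_coord 0 x)).const_mul p)).add
      (((hasFDerivAt_coord 1 x).mul (hasFDerivAt_coord 1 x)).const_mul p)) i]
  simp [Pi.single_apply]
  split <;> split <;> ring

noncomputable def minv (p r : ℝ) (x : Fin 3 → ℝ) : Matrix (Fin 3) (Fin 3) ℝ :=
  !![1/p + (x 1)^2/r, -(x 0 * x 1)/r, -(x 1)/r;
     -(x 0 * x 1)/r, 1/p + (x 0)^2/r, x 0/r;
     -(x 1)/r, x 0/r, 1/r]

lemma metric701_inv (p r : ℝ) (hp : p ≠ 0) (hr : r ≠ 0) (x : Fin 3 → ℝ) :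
    (metric701 p r x)⁻¹ = minv p r x := by
  apply Matrix.inv_eq_right_inv
  ext i j
  fin_cases i <;> fin_cases j <;>
    (simp [metric701, minv, Matrix.mul_apply, Fin.sum_univ_three, Matrix.one_apply]
     <;> field_simp <;> ring)

-- pd of metric entries
variable {p r : ℝ}

lemma pd_g00 (i : Fin 3) (x) : pd i (fun y => metric701 p r y 0 0) x = 0 := by
  have h : (fun y : Fin 3 → ℝ => metric701 p r y 0 0) = fun _ => p := by
    funext y; simp [metric701]
  rw [h, pd_const]

lemma pd_g01 (i : Fin 3) (x) : pd i (fun y => metric701 p r y 0 1) x = 0 := by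
  have h : (fun y : Fin 3 → ℝ => metric701 p r y 0 1) = fun _ => (0:ℝ) := by
    funext y; simp [metric701]
  rw [h, pd_const]

lemma pd_g10 (i : Fin 3) (x) : pd i (fun y => metric701 p r y 1 0) x = 0 := by
  have h : (fun y : Fin 3 → ℝ => metric701 p r y 1 0) = fun _ => (0:ℝ) := by
    funext y; simp [metric701]
  rw [h, pd_const]

lemma pd_g11 (i : Fin 3) (x) : pd i (fun y => metric701 p r y 1 1) x = 0 := by
  have h : (fun y : Fin 3 → ℝ => metric701 p r y 1 1) = fun _ => p := by
    funext y; simp [metric701]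
  rw [h, pd_const]

lemma pd_g02 (i : Fin 3) (x) :
    pd i (fun y => metric701 p r y 0 2) x = if (1:Fin 3) = i then p else 0 := by
  have h : (fun y : Fin 3 → ℝ => metric701 p r y 0 2) = fun y => p * y 1 := by
    funext y; simp [metric701]
  rw [h, pd_cmul]

lemma pd_g20 (i : Fin 3) (x) :
    pd i (fun y => metric701 p r y 2 0) x = if (1:Fin 3) = i then p else 0 := by
  have h : (fun y : Fin 3 → ℝ => metric701 p r y 2 0) = fun y => p * y 1 := by
    funext y; simp [metric701]
  rw [h, pd_cmul]

lemma pd_g12 (i : Fin 3) (x) :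
    pd i (fun y => metric701 p r y 1 2) x = if (0:Fin 3) = i then -p else 0 := by
  have h : (fun y : Fin 3 → ℝ => metric701 p r y 1 2) = fun y => -(p * y 0) := by
    funext y; simp [metric701]
  rw [h, pd_negcmul]

lemma pd_g21 (i : Fin 3) (x) :
    pd i (fun y => metric701 p r y 2 1) x = if (0:Fin 3) = i then -p else 0 := by
  have h : (fun y : Fin 3 → ℝ => metric701 p r y 2 1) = fun y => -(p * y 0) := by
    funext y; simp [metric701]
  rw [h, pd_negcmul]

lemma pd_g22 (i : Fin 3) (x) :
    pd i (fun y => metric701 p r y 2 2) x =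
      (if (0:Fin 3) = i then 2 * p * x 0 else 0) +
      (if (1:Fin 3) = i then 2 * p * x 1 else 0) := by
  have h : (fun y : Fin 3 → ℝ => metric701 p r y 2 2)
      = fun y => r + p * (y 0)^2 + p * (y 1)^2 := by
    funext y; simp [metric701]
  rw [h, pd_quad]

/-- closed form of the Christoffel symbols -/
noncomputable def Γv (k i j : Fin 3) (x : Fin 3 → ℝ) : ℝ :=
  if k = 0 then !![0,0,0; 0,0,1; 0,1,-x 0] i j
  else if k = 1 then !![0,0,-1; 0,0,0; -1,0,-x 1] i j
  else 0

lemma christoffel_eq (hp : p ≠ 0) (hr : r ≠ 0) (k i j : Fin 3) (x : Fin 3 → ℝ) :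
    christoffel (metric701 p r) k i j x = Γv k i j x := by
  rw [christoffel, metric701_inv p r hp hr x, Fin.sum_univ_three]
  fin_cases k <;> fin_cases i <;> fin_cases j <;>
    (simp [minv, Γv, pd_g00, pd_g01, pd_g02, pd_g10, pd_g11, pd_g12,
           pd_g20, pd_g21, pd_g22, Matrix.vecHead, Matrix.vecTail]
     <;> field_simp <;> ring)

set_option maxHeartbeats 2000000 in
lemma pd_christoffel (hp : p ≠ 0) (hr : r ≠ 0) (i l a b : Fin 3) (x : Fin 3 → ℝ) :
    pd i (fun y => christoffel (metric701 p r) l a b y) x =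
      if a = 2 ∧ b = 2 ∧ (l = 0 ∧ (0:Fin 3) = i ∨ l = 1 ∧ (1:Fin 3) = i)
      then -1 else 0 := by
  have h : (fun y => christoffel (metric701 p r) l a b y) = fun y => Γv l a b y :=
    funext fun y => christoffel_eq hp hr l a b y
  rw [h]
  fin_cases l <;> fin_cases a <;> fin_cases b <;>
    simp [Γv, Matrix.vecHead, Matrix.vecTail, pd_const, pd_negcoord]

set_option maxHeartbeats 4000000 in
lemma riemann_zero (hp : p ≠ 0) (hr : r ≠ 0) (l k i j : Fin 3) (x : Fin 3 → ℝ) :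
    riemann (metric701 p r) l k i j x = 0 := by
  rw [riemann, Fin.sum_univ_three]
  simp only [pd_christoffel hp hr, christoffel_eq hp hr]
  fin_cases l <;> fin_cases k <;> fin_cases i <;> fin_cases j <;>
    (norm_num [Γv, Matrix.vecHead, Matrix.vecTail, pd_const, pd_negcoord,
       Fin.ext_iff]; try ring)


/-- with vanishing torsion and vanishing dilaton, the one-loop
β-function equations for the (7₀|1) model reduce to `Ric = 0` and `R = 0`, and they hold. -/
theorem beta_function_eqs_metric701 (p r : ℝ) (hp : p ≠ 0) (hr : r ≠ 0) :
    (∀ (i j : Fin 3) (x : Fin 3 → ℝ), ricci (metric701 p r) i j x = 0) ∧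
    (∀ x : Fin 3 → ℝ, scalarCurv (metric701 p r) x = 0) := by
  have hric : ∀ (i j : Fin 3) (x : Fin 3 → ℝ), ricci (metric701 p r) i j x = 0 := by
    intro i j x
    rw [ricci, Fin.sum_univ_three, riemann_zero hp hr, riemann_zero hp hr,
      riemann_zero hp hr]
    ring
  refine ⟨hric, fun x => ?_⟩
  rw [scalarCurv, Fin.sum_univ_three]
  simp only [hric, mul_zero, Finset.sum_const_zero, add_zero]
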